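/- In the Gaudin realization, the B-operators decompose in terms of untwisted ones: B_M(μ) = ∑_{k=0}^{M−1} ξ^k ∑_{j₁<⋯<j_{M−k}} B_{M−k}(μ_{j₁},…,μ_{j_{M−k}})₀ · p̂_k^(M−k) + ξ^M p̂_M, where B_L(·)₀ is the operator B_L evaluated at ξ = 0 (i.e., built from X⁻(λ)₀ = ∑_a X⁻_a/(λ − z_a)), and p̂_i^(j) = (−h_gl/2 + j)(−h_gl/2 + j + 1)⋯(−h_gl/2 + i + j − 1), p̂_M = p̂_M^(0). -/

import Mathlib

open Finset
open scoped Classical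

/-- The operators B^(k)_M(μ₁,…,μ_M) = ∏_{n=k}^{M+k−1} (X⁻(μ_{n−k+1}) + nξ). -/
noncomputable def Bop {A : Type*} [Ring A] [Module ℂ A]
    (Xm : ℂ → A) (ξ : ℂ) : ℕ → List ℂ → A
  | _, [] => 1
  | k, μ :: t => (Xm μ + ((k : ℂ) * ξ) • (1 : A)) * Bop Xm ξ (k + 1) t

/-- the twisted Gaudin generator X⁻(λ) = ∑_a (X⁻_a/(λ−z_a) − (ξ/2)h_a) -/
noncomputable def XmGaudin {H : Type*} [AddCommGroup H] [Module ℂ H] {N : ℕ}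
    (z : Fin N → ℂ) (ξ : ℂ) (XmA hA : Fin N → Module.End ℂ H) (lam : ℂ) :
    Module.End ℂ H :=
  ∑ a, ((lam - z a)⁻¹ • XmA a - (ξ / 2) • hA a)

/-- the untwisted generator X⁻(λ)₀ = ∑_a X⁻_a/(λ−z_a) -/
noncomputable def Xm0Gaudin {H : Type*} [AddCommGroup H] [Module ℂ H] {N : ℕ}
    (z : Fin N → ℂ) (XmA : Fin N → Module.End ℂ H) (lam : ℂ) : Module.End ℂ H :=
  ∑ a, (lam - z a)⁻¹ • XmA a

/-- p̂_i^(j) = (−h_gl/2 + j)(−h_gl/2 + j + 1)⋯(−h_gl/2 + i + j − 1) -/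
noncomputable def phat {H : Type*} [AddCommGroup H] [Module ℂ H]
    (hgl : Module.End ℂ H) (i j : ℕ) : Module.End ℂ H :=
  ((List.range i).map (fun n =>
    (-(1 / 2) : ℂ) • hgl + (((j : ℂ) + (n : ℂ)) • (1 : Module.End ℂ H)))).prod

/-! ### Auxiliary combinatorial lemmas -/

universe u

theorem my_flatMap_pure {α β : Type*} (f : α → β) : ∀ (l : List α),
    (l.flatMap fun a => [f a]) = l.map f
  | [] => rfl
  | a :: t => by simp [List.flatMap_cons, my_flatMap_pure f t]

theorem my_list_coe_eq_map {α β : Type u} (f : α → β) (l : List α) :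
    (l >>= fun a => (pure (f a) : List β)) = l.map f :=
  my_flatMap_pure f l

theorem my_sublistsLen_map {α β : Type*} (f : α → β) :
    ∀ (n : ℕ) (l : List α),
      List.sublistsLen n (l.map f) = (List.sublistsLen n l).map (List.map f)
  | 0, l => by simp
  | n + 1, [] => by simp
  | n + 1, a :: l => by
    rw [List.map_cons, List.sublistsLen_succ_cons, List.sublistsLen_succ_cons,
      my_sublistsLen_map f (n + 1) l, my_sublistsLen_map f n l, List.map_append,
      List.map_map, List.map_map]
    rfl

theorem my_sublistsLen_finRange (M r : ℕ) :
    (↑(List.sublistsLen r (List.finRange M)) : Multiset (List (Fin M))) =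
      (univ : Finset {f : Fin r → Fin M // StrictMono f}).val.map
        (fun f => List.ofFn f.1) := by
  have hnodL : (↑(List.sublistsLen r (List.finRange M)) : Multiset (List (Fin M))).Nodup := by
    exact ((List.sublistsLen_sublist_sublists' r (List.finRange M)).nodup
      (List.nodup_sublists'.mpr (List.nodup_finRange M)))
  have hnodR : ((univ : Finset {f : Fin r → Fin M // StrictMono f}).val.map
      (fun f => List.ofFn f.1)).Nodup := by
    refine Multiset.Nodup.map (fun f g h => Subtype.ext (List.ofFn_injective h)) univ.nodup
  refine (Multiset.Nodup.ext hnodL hnodR).mpr (fun l => ?_)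
  simp only [Multiset.mem_coe, List.mem_sublistsLen, Multiset.mem_map, Finset.mem_univ,
    Multiset.mem_coe] at *
  constructor
  · rintro ⟨hsub, hlen⟩
    have hpw : l.Pairwise (· < ·) := (List.pairwise_lt_finRange M).sublist hsub
    subst hlen
    exact ⟨⟨l.get, fun i j hij => List.pairwise_iff_get.mp hpw i j hij⟩,
      Finset.mem_univ _, List.ofFn_get l⟩
  · rintro ⟨⟨f, hf⟩, -, rfl⟩
    have hsorted : (List.ofFn f).Pairwise (· < ·) := by
      rw [List.pairwise_ofFn]
      exact fun i j h => hf h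
    have hnd : (List.ofFn f).Nodup := hsorted.nodup
    haveI : IsAntisymm (Fin M) (· < ·) :=
      ⟨fun a b h h' => absurd h' (asymm h)⟩
    refine ⟨List.sublist_of_subperm_of_pairwise
      (hnd.subperm (fun x _ => List.mem_finRange x)) hsorted ?_, by simp⟩
    exact List.pairwise_lt_finRange M

theorem my_bridge {β : Type*} [AddCommMonoid β] (M r : ℕ) (μ : Fin M → ℂ)
    (g : List ℂ → β) :
    ((List.sublistsLen r (List.ofFn μ)).map g).sum =
      ∑ f : {f : Fin r → Fin M // StrictMono f}, g (List.ofFn (μ ∘ f.1)) := by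
  rw [List.ofFn_eq_map, my_sublistsLen_map]
  have := congrArg (fun s : Multiset (List (Fin M)) => (s.map (fun l => g (l.map μ))).sum)
    (my_sublistsLen_finRange M r)
  simp only [Multiset.map_coe, Multiset.sum_coe, Multiset.map_map] at this
  rw [List.map_map]
  refine Eq.trans ?_ (this.trans ?_)
  · rfl
  · rw [Finset.sum]
    congr 1
    ext f
    simp [Function.comp, List.map_ofFn]

/-! ### Algebraic lemmas -/

section Alg
variable {H : Type*} [AddCommGroup H] [Module ℂ H]

local notation "E" => Module.End ℂ H

theorem phat_eq (hgl : E) (i j : ℕ) :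
    phat hgl i j = ((List.range i).map (fun n : ℕ =>
      (-(1 / 2) : ℂ) • hgl + (((j : ℂ) + ((n : ℕ) : ℂ)) • (1 : E)))).prod := by
  unfold phat
  rw [my_list_coe_eq_map (fun a : ℕ => (a : ℂ)) (List.range i), List.map_map]
  rfl

theorem phat_zero (hgl : E) (j : ℕ) : phat hgl 0 j = 1 := by
  rw [phat_eq]; simp

theorem phat_succ_left (hgl : E) (i j : ℕ) :
    phat hgl (i+1) j
      = ((-(1/2) : ℂ) • hgl + ((j : ℂ)) • (1 : E)) * phat hgl i (j+1) := by
  rw [phat_eq, phat_eq, List.range_succ_eq_map, List.map_cons, List.prod_cons, List.map_map]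
  congr 1
  · congr 1
    norm_num
  · refine congrArg List.prod (congrArg (fun f => List.map f (List.range i)) ?_)
    funext n
    simp only [Function.comp_apply]
    congr 2
    push_cast
    ring

theorem Dc_mul_X0 (hgl : E) (X0 : ℂ → E)
    (hc : ∀ lam, hgl * X0 lam = X0 lam * hgl - (2:ℂ) • X0 lam) (c lam : ℂ) :
    ((-(1/2) : ℂ) • hgl + c • (1 : E)) * X0 lam
      = X0 lam * ((-(1/2) : ℂ) • hgl + (c+1) • (1 : E)) := by
  rw [add_mul, mul_add, smul_mul_assoc, mul_smul_comm, smul_mul_assoc, mul_smul_comm,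
    one_mul, mul_one, hc lam]
  module

theorem Dc_mul_prod (hgl : E) (X0 : ℂ → E)
    (hc : ∀ lam, hgl * X0 lam = X0 lam * hgl - (2:ℂ) • X0 lam) :
    ∀ (l : List ℂ) (c : ℂ),
    ((-(1/2) : ℂ) • hgl + c • (1 : E)) * (l.map X0).prod
      = (l.map X0).prod * ((-(1/2) : ℂ) • hgl + ((c + l.length)) • (1 : E))
  | [], c => by simp
  | a :: t, c => by
    rw [List.map_cons, List.prod_cons, ← mul_assoc, Dc_mul_X0 hgl X0 hc c a, mul_assoc,
      Dc_mul_prod hgl X0 hc t (c+1), ← mul_assoc]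
    congr 3
    simp only [List.length_cons]
    push_cast
    ring

theorem Bop_zero (Xm : ℂ → E) : ∀ (k : ℕ) (l : List ℂ),
    Bop Xm 0 k l = (l.map Xm).prod
  | _, [] => by simp [Bop]
  | k, a :: t => by simp [Bop, Bop_zero Xm (k+1) t]

theorem key (hgl : E) (X0 : ℂ → E) (ξ : ℂ)
    (hc : ∀ lam, hgl * X0 lam = X0 lam * hgl - (2:ℂ) • X0 lam) :
    ∀ (l : List ℂ) (k : ℕ),
    Bop (fun lam => X0 lam - (ξ/2) • hgl) ξ k l
      = ∑ m ∈ Finset.range (l.length+1), ξ^m •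
          ((List.sublistsLen (l.length - m) l).map
            (fun S => (S.map X0).prod * phat hgl m (k + (l.length - m)))).sum
  | [], k => by
    simp [Bop, phat_zero]
  | a :: t, k => by
    have IH := key hgl X0 ξ hc t (k+1)
    set L := t.length with hL
    have hfac : (X0 a - (ξ/2) • hgl + (((k:ℕ):ℂ) * ξ) • (1 : E))
        = X0 a + ξ • ((-(1/2) : ℂ) • hgl + ((k:ℕ):ℂ) • (1 : E)) := by
      module
    have hB : Bop (fun lam => X0 lam - (ξ/2) • hgl) ξ k (a :: t)
        = (X0 a + ξ • ((-(1/2) : ℂ) • hgl + ((k:ℕ):ℂ) • (1 : E))) *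
          Bop (fun lam => X0 lam - (ξ/2) • hgl) ξ (k+1) t := by
      rw [Bop, hfac]
    rw [hB, IH]
    set D : E := (-(1/2) : ℂ) • hgl + ((k:ℕ):ℂ) • (1 : E) with hD
    set W : ℕ → E := fun m => ((List.sublistsLen (L - m) t).map
      (fun S => (S.map X0).prod * phat hgl m (k+1 + (L - m)))).sum with hW
    set U : ℕ → E := fun m => ((List.sublistsLen (L+1 - m) t).map
      (fun S => (S.map X0).prod * phat hgl m (k + (L+1 - m)))).sum with hU
    set V : ℕ → E := fun m => ((List.sublistsLen (L - m) t).map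
      (fun S => (X0 a * (S.map X0).prod) * phat hgl m (k+1 + (L - m)))).sum with hV
    have hXW : ∀ m, X0 a * W m = V m := by
      intro m
      simp only [hW, hV]
      rw [← List.sum_map_mul_left]
      simp only [mul_assoc]
    have hDW : ∀ m, D * W m = U (m+1) := by
      intro m
      simp only [hW, hU]
      have harg : L + 1 - (m+1) = L - m := by omega
      rw [harg, ← List.sum_map_mul_left]
      refine congrArg List.sum (List.map_congr_left fun S hS => ?_)
      have hlen : S.length = L - m := List.length_of_sublistsLen hS
      rw [hD, ← mul_assoc, Dc_mul_prod hgl X0 hc S ((k:ℕ):ℂ), hlen, mul_assoc]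
      refine congrArg (fun x => (S.map X0).prod * x) ?_
      have h1 : ((k:ℕ):ℂ) + ((L - m : ℕ):ℂ) = (((k + (L - m)) : ℕ) : ℂ) := by push_cast; ring
      have h2 : k + 1 + (L - m) = (k + (L - m)) + 1 := by omega
      rw [h1, h2, ← phat_succ_left]
    have lhs_eq : (X0 a + ξ • D) * (∑ m ∈ Finset.range (L+1), ξ^m • W m)
        = (∑ m ∈ Finset.range (L+1), ξ^m • V m)
          + (∑ m ∈ Finset.range (L+1), ξ^(m+1) • U (m+1)) := by
      rw [add_mul, Finset.mul_sum, Finset.mul_sum]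
      congr 1
      · refine Finset.sum_congr rfl (fun m _ => ?_)
        rw [mul_smul_comm, hXW m]
      · refine Finset.sum_congr rfl (fun m _ => ?_)
        rw [smul_mul_assoc, mul_smul_comm, hDW m, smul_smul, ← pow_succ']
    rw [lhs_eq]
    simp only [List.length_cons]
    set T : ℕ → E := fun m => ((List.sublistsLen (L+1 - m) (a :: t)).map
      (fun S => (S.map X0).prod * phat hgl m (k + (L+1 - m)))).sum with hT
    have hU0 : U 0 = 0 := by
      simp only [hU]
      rw [List.sublistsLen_of_length_lt (by omega)]
      simp
    have hsplit : ∀ m ∈ Finset.range (L+1),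
        ξ^m • T m = ξ^m • U m + ξ^m • V m := by
      intro m hm
      have hm' : m ≤ L := Nat.lt_succ_iff.mp (Finset.mem_range.mp hm)
      have h3 : L + 1 - m = (L - m) + 1 := by omega
      have h4 : k + ((L - m) + 1) = k + 1 + (L - m) := by omega
      simp only [hT]
      rw [h3, h4, List.sublistsLen_succ_cons, List.map_append, List.sum_append, smul_add]
      congr 1
      · refine congrArg (fun x => ξ^m • x) ?_
        simp only [hU]
        rw [h3, h4]
      · refine congrArg (fun x => ξ^m • x) ?_
        simp only [hV]
        rw [List.map_map]
        refine congrArg List.sum ?_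
        refine congrArg (fun f => List.map f (List.sublistsLen (L - m) t)) ?_
        funext S
        simp only [Function.comp_apply, List.map_cons, List.prod_cons, mul_assoc]
    have hTL : T (L+1) = U (L+1) := by
      simp only [hT, hU]
      simp
    have hsum : ∑ m ∈ Finset.range (L+1), ξ^(m+1) • U (m+1)
        = (∑ m ∈ Finset.range (L+1), ξ^m • U m) + ξ^(L+1) • U (L+1) := by
      have h := Finset.sum_range_succ' (fun m => ξ^m • U m) (L+1)
      rw [Finset.sum_range_succ] at h
      rw [hU0, smul_zero, add_zero] at h
      exact h.symm
    have rhs_eq : ∑ m ∈ Finset.range (L+1+1), ξ^m • T m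
        = (∑ m ∈ Finset.range (L+1), ξ^m • V m)
          + (∑ m ∈ Finset.range (L+1), ξ^(m+1) • U (m+1)) := by
      conv_lhs => rw [Finset.sum_range_succ, Finset.sum_congr rfl hsplit,
        Finset.sum_add_distrib, hTL]
      rw [hsum]
      abel
    rw [rhs_eq]
end Alg

/-- decomposition of the twisted B-operators into untwisted ones:
    B_M(μ) = ∑_{k=0}^{M−1} ξ^k ∑_{j₁<⋯<j_{M−k}} B_{M−k}(μ_{j₁},…)₀ p̂_k^{(M−k)}
             + ξ^M p̂_M. -/
theorem Bop_untwisted_decomposition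
    {H : Type*} [AddCommGroup H] [Module ℂ H]
    (N : ℕ) (z : Fin N → ℂ) (hz : Function.Injective z) (ξ : ℂ)
    (hA XmA : Fin N → Module.End ℂ H)
    (hhh : ∀ a b, hA a * hA b = hA b * hA a)
    (hhXm : ∀ a b, hA a * XmA b - XmA b * hA a = if a = b then (-2 : ℂ) • XmA a else 0)
    (hXmXm : ∀ a b, XmA a * XmA b = XmA b * XmA a)
    (M : ℕ) (μ : Fin M → ℂ) (hμ : Function.Injective μ)
    (hdisj : ∀ i a, μ i ≠ z a) :
    Bop (XmGaudin z ξ XmA hA) ξ 0 (List.ofFn μ) =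
      (∑ k ∈ Finset.range M, ξ ^ k •
          ∑ f : {f : Fin (M - k) → Fin M // StrictMono f},
            Bop (Xm0Gaudin z XmA) (0 : ℂ) 0 (List.ofFn (μ ∘ f.1)) *
              phat (∑ a, hA a) k (M - k))
        + ξ ^ M • phat (∑ a, hA a) M 0 := by
  classical
  set hgl : Module.End ℂ H := ∑ a, hA a with hhgl
  set X0 : ℂ → Module.End ℂ H := Xm0Gaudin z XmA with hX0
  have hkeyc : ∀ b, hgl * XmA b = (-2:ℂ) • XmA b + XmA b * hgl := by
    intro b
    have h : hgl * XmA b - XmA b * hgl = (-2:ℂ) • XmA b := by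
      rw [hhgl, Finset.sum_mul, Finset.mul_sum, ← Finset.sum_sub_distrib,
        Finset.sum_congr rfl (fun a _ => hhXm a b)]
      simp
    rw [sub_eq_iff_eq_add] at h
    exact h
  have hc : ∀ lam, hgl * X0 lam = X0 lam * hgl - (2:ℂ) • X0 lam := by
    intro lam
    rw [hX0]
    unfold Xm0Gaudin
    rw [Finset.mul_sum, Finset.sum_mul, Finset.smul_sum, ← Finset.sum_sub_distrib]
    refine Finset.sum_congr rfl fun b _ => ?_
    rw [mul_smul_comm, hkeyc b, smul_mul_assoc]
    module
  have hXm : XmGaudin z ξ XmA hA = fun lam => X0 lam - (ξ/2) • hgl := by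
    funext lam
    rw [hX0, hhgl]
    unfold XmGaudin Xm0Gaudin
    rw [Finset.smul_sum, ← Finset.sum_sub_distrib]
  have hmain := key hgl X0 ξ hc (List.ofFn μ) 0
  rw [hXm, hmain, List.length_ofFn, Finset.sum_range_succ]
  congr 1
  · refine Finset.sum_congr rfl fun m hm => ?_
    refine congrArg (fun x => ξ^m • x) ?_
    simp only [Nat.zero_add]
    rw [my_bridge M (M - m) μ (fun S => (S.map X0).prod * phat hgl m (M - m))]
    refine Finset.sum_congr rfl fun f _ => ?_
    rw [Bop_zero]
  · refine congrArg (fun x => ξ^M • x) ?_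
    simp [Nat.sub_self, List.sublistsLen_zero, phat_zero]
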